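/- arXiv:1412.3216 — 3 statements merged into one kernel-verified Lean document; each statement's English description precedes it below -/
import Mathlib

section
/- Let λ ∈ ℂ[T] be non-constant, u a root of X² - λX + 1 over ℂ(T) (not lying in ℂ(T)), and 𝒪 = ℂ[T][u] = ℂ[T] ⊕ ℂ[T]·u. Then the unit group of 𝒪 equals { c·uⁿ : c ∈ ℂ^×, n ∈ ℤ }. -/
open Polynomial

/-- The unit group of 𝒪 = ℂ[T][u] is { c·uⁿ : c ∈ ℂˣ, n ∈ ℤ }, where u is a root
of X² - λX + 1 not lying in ℂ(T). -/
theorem stmt_3 (l : Polynomial ℂ) (hl : 0 < l.natDegree)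
    (K : Type*) [Field K] [Algebra (RatFunc ℂ) K]
    (φ : Polynomial ℂ →+* K)
    (hφ : φ = (algebraMap (RatFunc ℂ) K).comp (algebraMap (Polynomial ℂ) (RatFunc ℂ)))
    (u : K) (hu : u ^ 2 - φ l * u + 1 = 0)
    (hu' : u ∉ Set.range (algebraMap (RatFunc ℂ) K))
    (O : Subring K) (hO : O = Subring.closure (Set.range φ ∪ {u})) :
    ∀ θ : K, (θ ∈ O ∧ ∃ θ' ∈ O, θ * θ' = 1) ↔
      ∃ c : ℂ, c ≠ 0 ∧ ∃ n : ℤ, θ = φ (Polynomial.C c) * u ^ n := by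
  subst hO
  have hl0 : l ≠ 0 := fun h => by simp [h] at hl
  have hφ' : ∀ p, φ p = algebraMap (RatFunc ℂ) K (algebraMap (Polynomial ℂ) (RatFunc ℂ) p) :=
    fun p => by rw [hφ]; rfl
  have hιinj : Function.Injective (algebraMap (Polynomial ℂ) (RatFunc ℂ)) :=
    IsFractionRing.injective _ _
  have hφinj : Function.Injective φ := by
    rw [hφ]
    exact (algebraMap (RatFunc ℂ) K).injective.comp hιinj
  have huu : u * (φ l - u) = 1 := by linear_combination -hu
  have hu0 : u ≠ 0 := by
    intro h; rw [h, zero_mul] at huu; exact zero_ne_one huu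
  have huinv : u⁻¹ = φ l - u := inv_eq_of_mul_eq_one_right huu
  -- membership facts
  have hφmem : ∀ p, φ p ∈ Subring.closure (Set.range φ ∪ {u}) :=
    fun p => Subring.subset_closure (Or.inl ⟨p, rfl⟩)
  have humem : u ∈ Subring.closure (Set.range φ ∪ {u}) :=
    Subring.subset_closure (Or.inr rfl)
  have hupow : ∀ n : ℤ, u ^ n ∈ Subring.closure (Set.range φ ∪ {u}) := by
    intro n
    cases n with
    | ofNat m => simpa using pow_mem humem m
    | negSucc m =>
        rw [zpow_negSucc, ← inv_pow, huinv]
        exact pow_mem (sub_mem (hφmem l) humem) _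
  -- representation
  have hrep : ∀ θ ∈ Subring.closure (Set.range φ ∪ {u}),
      ∃ a b : Polynomial ℂ, θ = φ a + φ b * u := by
    intro θ hθ
    let S : Subring K :=
      { carrier := {x | ∃ a b : Polynomial ℂ, x = φ a + φ b * u}
        zero_mem' := ⟨0, 0, by simp⟩
        one_mem' := ⟨1, 0, by simp⟩
        add_mem' := by
          rintro x y ⟨a, b, rfl⟩ ⟨c, d, rfl⟩
          exact ⟨a + c, b + d, by simp only [map_add]; ring⟩
        neg_mem' := by
          rintro x ⟨a, b, rfl⟩
          exact ⟨-a, -b, by simp only [map_neg]; ring⟩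
        mul_mem' := by
          rintro x y ⟨a, b, rfl⟩ ⟨c, d, rfl⟩
          refine ⟨a * c - b * d, a * d + b * c + l * (b * d), ?_⟩
          simp only [map_add, map_mul, map_sub]
          linear_combination φ b * φ d * hu }
    have hle : Subring.closure (Set.range φ ∪ {u}) ≤ S := by
      apply Subring.closure_le.mpr
      rintro x (⟨p, rfl⟩ | hx)
      · exact ⟨p, 0, by simp⟩
      · rw [Set.mem_singleton_iff] at hx
        exact ⟨0, 1, by simp [hx]⟩
    exact hle hθ
  -- uniqueness of representation
  have huniq0 : ∀ a b : Polynomial ℂ, φ a + φ b * u = 0 → a = 0 ∧ b = 0 := by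
    intro a b h
    by_cases hb : b = 0
    · subst hb
      simp only [map_zero, zero_mul, add_zero] at h
      exact ⟨hφinj (by rw [h, map_zero]), rfl⟩
    · exfalso
      apply hu'
      have hbι : algebraMap (Polynomial ℂ) (RatFunc ℂ) b ≠ 0 :=
        fun h0 => hb (hιinj (by rw [h0, map_zero]))
      have hφb : φ b ≠ 0 := by
        rw [hφ']
        exact (map_ne_zero_iff _ (algebraMap (RatFunc ℂ) K).injective).mpr hbι
      refine ⟨-(algebraMap (Polynomial ℂ) (RatFunc ℂ) a) /
        (algebraMap (Polynomial ℂ) (RatFunc ℂ) b), ?_⟩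
      rw [map_div₀, map_neg, ← hφ', ← hφ']
      field_simp
      linear_combination -h
  -- main descent lemma
  have key : ∀ N : ℕ, ∀ a b : Polynomial ℂ, a.natDegree + b.natDegree ≤ N → ∀ c : ℂ, c ≠ 0 →
      a ^ 2 + l * (a * b) + b ^ 2 = C c →
      ∃ c' : ℂ, c' ≠ 0 ∧ ∃ n : ℤ, φ a + φ b * u = φ (C c') * u ^ n := by
    intro N
    induction N using Nat.strong_induction_on with
    | _ N ih =>
    intro a b hdeg c hc hnorm
    by_cases hb : b = 0
    · subst hb
      have hnorm' : a ^ 2 = C c := by linear_combination hnorm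
      have hA : a.natDegree = 0 := by
        have h1 := congrArg natDegree hnorm'
        rw [natDegree_pow, natDegree_C] at h1
        omega
      obtain ⟨x, hx⟩ := natDegree_eq_zero.mp hA
      have hx0 : x ≠ 0 := by
        rintro rfl
        rw [map_zero] at hx
        rw [← hx] at hnorm'
        simp only [ne_eq, OfNat.ofNat_ne_zero, not_false_eq_true, zero_pow] at hnorm'
        exact hc (by simpa using hnorm'.symm)
      exact ⟨x, hx0, 0, by rw [← hx]; simp⟩
    by_cases ha : a = 0
    · subst ha
      have hnorm' : b ^ 2 = C c := by linear_combination hnorm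
      have hB : b.natDegree = 0 := by
        have h1 := congrArg natDegree hnorm'
        rw [natDegree_pow, natDegree_C] at h1
        omega
      obtain ⟨x, hx⟩ := natDegree_eq_zero.mp hB
      have hx0 : x ≠ 0 := by
        rintro rfl
        rw [map_zero] at hx
        rw [← hx] at hnorm'
        simp only [ne_eq, OfNat.ofNat_ne_zero, not_false_eq_true, zero_pow] at hnorm'
        exact hc (by simpa using hnorm'.symm)
      exact ⟨x, hx0, 1, by rw [← hx]; simp⟩
    -- both nonzero
    have hab : a * b ≠ 0 := mul_ne_zero ha hb
    have hlab : l * (a * b) ≠ 0 := mul_ne_zero hl0 hab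
    have hdab : (l * (a * b)).natDegree = l.natDegree + (a.natDegree + b.natDegree) := by
      rw [natDegree_mul hl0 hab, natDegree_mul ha hb]
    have ha2deg : (a ^ 2).natDegree = 2 * a.natDegree := natDegree_pow a 2
    have hb2deg : (b ^ 2).natDegree = 2 * b.natDegree := natDegree_pow b 2
    have hcoeffC : ∀ n : ℕ, n ≠ 0 →
        (a ^ 2).coeff n + (l * (a * b)).coeff n + (b ^ 2).coeff n = 0 := by
      intro n hn
      have h1 := congrArg (fun p => Polynomial.coeff p n) hnorm
      simpa [coeff_add, coeff_C, hn] using h1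
    have hαne : a.leadingCoeff ≠ 0 := leadingCoeff_ne_zero.mpr ha
    have hβne : b.leadingCoeff ≠ 0 := leadingCoeff_ne_zero.mpr hb
    have hlne2 : l.leadingCoeff ≠ 0 := leadingCoeff_ne_zero.mpr hl0
    have hor : l.natDegree + b.natDegree ≤ a.natDegree ∨
        l.natDegree + a.natDegree ≤ b.natDegree := by
      by_contra hcon
      push_neg at hcon
      obtain ⟨h1, h2⟩ := hcon
      have hc1 : (a ^ 2).coeff (l.natDegree + (a.natDegree + b.natDegree)) = 0 :=
        coeff_eq_zero_of_natDegree_lt (by rw [ha2deg]; omega)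
      have hc2 : (b ^ 2).coeff (l.natDegree + (a.natDegree + b.natDegree)) = 0 :=
        coeff_eq_zero_of_natDegree_lt (by rw [hb2deg]; omega)
      have hc3 : (l * (a * b)).coeff (l.natDegree + (a.natDegree + b.natDegree)) =
          l.leadingCoeff * (a.leadingCoeff * b.leadingCoeff) := by
        rw [← hdab, coeff_natDegree, leadingCoeff_mul, leadingCoeff_mul]
      have h4 := hcoeffC (l.natDegree + (a.natDegree + b.natDegree)) (by omega)
      rw [hc1, hc2, hc3] at h4
      simp only [zero_add, add_zero] at h4
      exact hlne2 (by
        have := mul_eq_zero.mp h4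
        rcases this with h | h
        · exact h
        · exact absurd h (mul_ne_zero hαne hβne))
    rcases hor with h1 | h1
    · -- a dominates : multiply by u
      have heq : a.natDegree = l.natDegree + b.natDegree := by
        by_contra hne'
        have hlt : l.natDegree + b.natDegree < a.natDegree := lt_of_le_of_ne h1 (Ne.symm hne')
        have hc1 : (a ^ 2).coeff (2 * a.natDegree) = a.leadingCoeff ^ 2 := by
          rw [← ha2deg, coeff_natDegree, leadingCoeff_pow]
        have hc2 : (l * (a * b)).coeff (2 * a.natDegree) = 0 :=
          coeff_eq_zero_of_natDegree_lt (by rw [hdab]; omega)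
        have hc3 : (b ^ 2).coeff (2 * a.natDegree) = 0 :=
          coeff_eq_zero_of_natDegree_lt (by rw [hb2deg]; omega)
        have h4 := hcoeffC (2 * a.natDegree) (by omega)
        rw [hc1, hc2, hc3] at h4
        simp only [add_zero] at h4
        exact pow_ne_zero 2 hαne h4
      have hc1 : (a ^ 2).coeff (2 * a.natDegree) = a.leadingCoeff ^ 2 := by
        rw [← ha2deg, coeff_natDegree, leadingCoeff_pow]
      have hc2 : (l * (a * b)).coeff (2 * a.natDegree) =
          l.leadingCoeff * (a.leadingCoeff * b.leadingCoeff) := by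
        rw [show 2 * a.natDegree = l.natDegree + (a.natDegree + b.natDegree) by omega,
          ← hdab, coeff_natDegree, leadingCoeff_mul, leadingCoeff_mul]
      have hc3 : (b ^ 2).coeff (2 * a.natDegree) = 0 :=
        coeff_eq_zero_of_natDegree_lt (by rw [hb2deg]; omega)
      have h4 := hcoeffC (2 * a.natDegree) (by omega)
      rw [hc1, hc2, hc3] at h4
      have hrel : a.leadingCoeff + l.leadingCoeff * b.leadingCoeff = 0 := by
        have h5 : a.leadingCoeff * (a.leadingCoeff + l.leadingCoeff * b.leadingCoeff) = 0 := by
          linear_combination h4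
        rcases mul_eq_zero.mp h5 with h | h
        · exact absurd h hαne
        · exact h
      have hlb : (l * b).natDegree = l.natDegree + b.natDegree := natDegree_mul hl0 hb
      have hco : (a + l * b).coeff a.natDegree = 0 := by
        rw [coeff_add]
        have h6 : (l * b).coeff a.natDegree = l.leadingCoeff * b.leadingCoeff := by
          rw [heq, ← hlb, coeff_natDegree, leadingCoeff_mul]
        rw [h6, coeff_natDegree]
        exact hrel
      have hdegnew : (a + l * b).natDegree < a.natDegree := by
        have hle : (a + l * b).natDegree ≤ a.natDegree := by
          refine le_trans (natDegree_add_le _ _) ?_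
          rw [hlb, ← heq, max_self]
        rcases lt_or_eq_of_le hle with h | h
        · exact h
        · exfalso
          have hz : a + l * b = 0 := leadingCoeff_eq_zero.mp (by
            rw [← coeff_natDegree, h]; exact hco)
          rw [hz] at h
          simp only [natDegree_zero] at h
          omega
      have hnorm1 : (-b) ^ 2 + l * ((-b) * (a + l * b)) + (a + l * b) ^ 2 = C c := by
        linear_combination hnorm
      obtain ⟨c', hc', n, hn⟩ := ih ((-b).natDegree + (a + l * b).natDegree)
        (by rw [natDegree_neg]; omega) (-b) (a + l * b) le_rfl c hc hnorm1
      have hstep : (φ a + φ b * u) * u = φ (-b) + φ (a + l * b) * u := by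
        simp only [map_add, map_mul, map_neg]
        linear_combination φ b * hu
      refine ⟨c', hc', n - 1, ?_⟩
      have h2 : (φ a + φ b * u) * u = (φ (C c') * u ^ (n - 1)) * u := by
        rw [hstep, hn, mul_assoc, ← zpow_add_one₀ hu0]
        norm_num
      exact mul_right_cancel₀ hu0 h2
    · -- b dominates : multiply by u⁻¹
      have heq : b.natDegree = l.natDegree + a.natDegree := by
        by_contra hne'
        have hlt : l.natDegree + a.natDegree < b.natDegree := lt_of_le_of_ne h1 (Ne.symm hne')
        have hc1 : (b ^ 2).coeff (2 * b.natDegree) = b.leadingCoeff ^ 2 := by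
          rw [← hb2deg, coeff_natDegree, leadingCoeff_pow]
        have hc2 : (l * (a * b)).coeff (2 * b.natDegree) = 0 :=
          coeff_eq_zero_of_natDegree_lt (by rw [hdab]; omega)
        have hc3 : (a ^ 2).coeff (2 * b.natDegree) = 0 :=
          coeff_eq_zero_of_natDegree_lt (by rw [ha2deg]; omega)
        have h4 := hcoeffC (2 * b.natDegree) (by omega)
        rw [hc1, hc2, hc3] at h4
        simp only [zero_add] at h4
        exact pow_ne_zero 2 hβne h4
      have hc1 : (b ^ 2).coeff (2 * b.natDegree) = b.leadingCoeff ^ 2 := by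
        rw [← hb2deg, coeff_natDegree, leadingCoeff_pow]
      have hc2 : (l * (a * b)).coeff (2 * b.natDegree) =
          l.leadingCoeff * (a.leadingCoeff * b.leadingCoeff) := by
        rw [show 2 * b.natDegree = l.natDegree + (a.natDegree + b.natDegree) by omega,
          ← hdab, coeff_natDegree, leadingCoeff_mul, leadingCoeff_mul]
      have hc3 : (a ^ 2).coeff (2 * b.natDegree) = 0 :=
        coeff_eq_zero_of_natDegree_lt (by rw [ha2deg]; omega)
      have h4 := hcoeffC (2 * b.natDegree) (by omega)
      rw [hc1, hc2, hc3] at h4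
      have hrel : l.leadingCoeff * a.leadingCoeff + b.leadingCoeff = 0 := by
        have h5 : b.leadingCoeff * (l.leadingCoeff * a.leadingCoeff + b.leadingCoeff) = 0 := by
          linear_combination h4
        rcases mul_eq_zero.mp h5 with h | h
        · exact absurd h hβne
        · exact h
      have hla : (l * a).natDegree = l.natDegree + a.natDegree := natDegree_mul hl0 ha
      have hco : (l * a + b).coeff b.natDegree = 0 := by
        rw [coeff_add]
        have h6 : (l * a).coeff b.natDegree = l.leadingCoeff * a.leadingCoeff := by
          rw [heq, ← hla, coeff_natDegree, leadingCoeff_mul]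
        rw [h6, coeff_natDegree]
        exact hrel
      have hdegnew : (l * a + b).natDegree < b.natDegree := by
        have hle : (l * a + b).natDegree ≤ b.natDegree := by
          refine le_trans (natDegree_add_le _ _) ?_
          rw [hla, ← heq, max_self]
        rcases lt_or_eq_of_le hle with h | h
        · exact h
        · exfalso
          have hz : l * a + b = 0 := leadingCoeff_eq_zero.mp (by
            rw [← coeff_natDegree, h]; exact hco)
          rw [hz] at h
          simp only [natDegree_zero] at h
          omega
      have hnorm1 : (l * a + b) ^ 2 + l * ((l * a + b) * (-a)) + (-a) ^ 2 = C c := by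
        linear_combination hnorm
      obtain ⟨c', hc', n, hn⟩ := ih ((l * a + b).natDegree + (-a).natDegree)
        (by rw [natDegree_neg]; omega) (l * a + b) (-a) le_rfl c hc hnorm1
      have hstep : (φ a + φ b * u) * (φ l - u) = φ (l * a + b) + φ (-a) * u := by
        simp only [map_add, map_mul, map_neg]
        linear_combination (-(φ b)) * hu
      refine ⟨c', hc', n + 1, ?_⟩
      have h2 : (φ a + φ b * u) * u⁻¹ = φ (C c') * u ^ n := by
        rw [huinv, hstep]; exact hn
      rw [← div_eq_mul_inv] at h2
      rw [(div_eq_iff hu0).mp h2, mul_assoc, ← zpow_add_one₀ hu0]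
  -- conclude
  intro θ
  constructor
  · rintro ⟨hθO, θ', hθ'O, hθθ'⟩
    obtain ⟨a, b, rfl⟩ := hrep θ hθO
    obtain ⟨p, q, rfl⟩ := hrep θ' hθ'O
    have hprod : (φ a + φ b * u) * (φ p + φ q * u) =
        φ (a * p - b * q) + φ (a * q + b * p + l * (b * q)) * u := by
      simp only [map_add, map_mul, map_sub]
      linear_combination φ b * φ q * hu
    have h1 : φ (a * p - b * q - 1) + φ (a * q + b * p + l * (b * q)) * u = 0 := by
      have h0 := hprod.symm.trans hθθ'
      simp only [map_add, map_sub, map_one, map_mul] at h0 ⊢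
      linear_combination h0
    obtain ⟨e1, e2⟩ := huniq0 _ _ h1
    have e1' : a * p - b * q = 1 := by linear_combination e1
    have hNmul : (a ^ 2 + l * (a * b) + b ^ 2) * (p ^ 2 + l * (p * q) + q ^ 2) = 1 := by
      linear_combination (a * p - b * q + 1) * e1' +
        (l * (a * p - b * q) + (a * q + b * p + l * (b * q))) * e2
    obtain ⟨k, hk, hCk⟩ := Polynomial.isUnit_iff.mp (IsUnit.of_mul_eq_one _ hNmul)
    exact key _ a b le_rfl k hk.ne_zero hCk.symm
  · rintro ⟨c, hc, n, rfl⟩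
    refine ⟨mul_mem (hφmem _) (hupow n), φ (C c⁻¹) * u ^ (-n),
      mul_mem (hφmem _) (hupow _), ?_⟩
    have hzp : u ^ n * u ^ (-n) = 1 := by
      rw [← zpow_add₀ hu0]
      simp
    calc (φ (C c) * u ^ n) * (φ (C c⁻¹) * u ^ (-n))
        = (φ (C c) * φ (C c⁻¹)) * (u ^ n * u ^ (-n)) := by ring
      _ = 1 := by
          rw [hzp, ← map_mul, ← C_mul, mul_inv_cancel₀ hc]
          simp
end

section
/- Let f ∈ ℂ[X] be a nonzero polynomial of even degree and λ ∈ ℂ[T] a non-constant polynomial. If f(λ) is a square in ℂ(T), then f is a square in ℂ[X]. -/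
open Polynomial


-- square criterion
lemma sq_of_even_counts (p : Polynomial ℂ) (_hp : p ≠ 0)
    (h : ∀ a : ℂ, Even (p.roots.count a)) : ∃ q : Polynomial ℂ, p = q ^ 2 := by
  have hsplit : p.Splits := IsAlgClosed.splits p
  have hfac := hsplit.eq_prod_roots
  obtain ⟨d, hd⟩ := IsAlgClosed.exists_pow_nat_eq p.leadingCoeff zero_lt_two
  refine ⟨C d * ∏ a ∈ p.roots.toFinset, (X - C a) ^ (p.roots.count a / 2), ?_⟩
  rw [mul_pow, ← C_pow, hd]
  conv_lhs => rw [hfac]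
  congr 1
  rw [Finset.prod_multiset_map_count, ← Finset.prod_pow]
  refine Finset.prod_congr rfl fun a _ => ?_
  rw [← pow_mul, Nat.div_mul_cancel (h a).two_dvd]


lemma at_most_one_sq (l : Polynomial ℂ) (hl : 0 < l.natDegree)
    (a b : ℂ) (hab : a ≠ b) (p q : Polynomial ℂ)
    (hp : l - C a = p ^ 2) (hq : l - C b = q ^ 2) : False := by
  have key : (p - q) * (p + q) = C (b - a) := by
    have : p ^ 2 - q ^ 2 = C b - C a := by rw [← hp, ← hq]; ring
    rw [← C_sub] at this; linear_combination this
  have hba : C (b - a) ≠ (0 : Polynomial ℂ) := by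
    simpa [sub_eq_zero] using hab.symm
  have h1 : p - q ≠ 0 := fun h => hba (by rw [← key, h, zero_mul])
  have h2 : p + q ≠ 0 := fun h => hba (by rw [← key, h, mul_zero])
  have hdeg : (p - q).natDegree + (p + q).natDegree = 0 := by
    rw [← natDegree_mul h1 h2, key, natDegree_C]
  have hd1 : (p - q).natDegree = 0 := Nat.eq_zero_of_add_eq_zero_right hdeg
  have hd2 : (p + q).natDegree = 0 := Nat.eq_zero_of_add_eq_zero_left hdeg
  have hp2 : (2 : Polynomial ℂ) * p = (p + q) + (p - q) := by ring
  have hdp : p.natDegree = 0 := by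
    have h2p : ((2 : Polynomial ℂ) * p).natDegree = p.natDegree := by
      rcases eq_or_ne p 0 with rfl | hp0
      · simp
      · rw [natDegree_mul (by norm_num) hp0, natDegree_ofNat, zero_add]
    have h3 := natDegree_add_le (p + q) (p - q)
    rw [← hp2, h2p, hd1, hd2] at h3
    simpa using h3
  have : l.natDegree = 0 := by
    have hle : l = p ^ 2 + C a := by rw [← hp]; ring
    have := natDegree_add_le (p ^ 2) (C a)
    rw [← hle, natDegree_pow, hdp, natDegree_C] at this
    omega
  omega


lemma poly_of_sq (F : Polynomial ℂ) (g : RatFunc ℂ)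
    (hg : algebraMap (Polynomial ℂ) (RatFunc ℂ) F = g ^ 2) :
    ∃ h : Polynomial ℂ, F = h ^ 2 := by
  have hint : IsIntegral (Polynomial ℂ) g := by
    refine ⟨X ^ 2 - C F, ?_, ?_⟩
    · apply monic_X_pow_sub_C _ (by norm_num)
    · simp [hg]
  obtain ⟨h, hh⟩ := IsIntegrallyClosed.isIntegral_iff.mp hint
  refine ⟨h, ?_⟩
  have : algebraMap (Polynomial ℂ) (RatFunc ℂ) F =
      algebraMap (Polynomial ℂ) (RatFunc ℂ) (h ^ 2) := by
    rw [hg, map_pow, hh]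
  exact IsFractionRing.injective (Polynomial ℂ) (RatFunc ℂ) this

/-- If f ∈ ℂ[X] is nonzero of even degree, λ ∈ ℂ[T] non-constant and f(λ) is a
square in ℂ(T), then f is a square in ℂ[X]. -/
theorem stmt_7 (f : Polynomial ℂ) (hf : f ≠ 0) (hev : Even f.natDegree)
    (l : Polynomial ℂ) (hl : 0 < l.natDegree)
    (hsq : ∃ g : RatFunc ℂ, algebraMap (Polynomial ℂ) (RatFunc ℂ) (f.comp l) = g ^ 2) :
    ∃ h : Polynomial ℂ, f = h ^ 2 := by
  obtain ⟨g, hg⟩ := hsq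
  obtain ⟨h, hcomp⟩ := poly_of_sq (f.comp l) g hg
  classical
  set c := f.leadingCoeff with hc
  set S := f.roots.toFinset with hS
  set m : ℂ → ℕ := fun a => f.roots.count a with hm
  have hc0 : c ≠ 0 := leadingCoeff_ne_zero.mpr hf
  have hfac : f = C c * ∏ a ∈ S, (X - C a) ^ m a := by
    conv_lhs => rw [(IsAlgClosed.splits f).eq_prod_roots]
    rw [Finset.prod_multiset_map_count]
  have hlC : ∀ a : ℂ, l - C a ≠ 0 := by
    intro a hz
    have : (l - C a).natDegree = l.natDegree := natDegree_sub_C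
    rw [hz, natDegree_zero] at this; omega
  have hcompfac : f.comp l = C c * ∏ a ∈ S, (l - C a) ^ m a := by
    conv_lhs => rw [hfac]
    rw [mul_comp, C_comp, prod_comp]
    simp [pow_comp, sub_comp]
  have hprodne : (∏ a ∈ S, (l - C a) ^ m a) ≠ 0 :=
    Finset.prod_ne_zero_iff.mpr fun a _ => pow_ne_zero _ (hlC a)
  have hcount : ∀ t : ℂ, (f.comp l).roots.count t
      = ∑ a ∈ S, m a * (l - C a).roots.count t := by
    intro t
    rw [hcompfac, roots_C_mul _ hc0, roots_prod _ _ hprodne, Multiset.count_bind]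
    rw [Finset.sum]
    congr 1
    apply Multiset.map_congr rfl
    intro b _
    rw [roots_pow, Multiset.count_nsmul]
  have hcompeven : ∀ t : ℂ, Even ((f.comp l).roots.count t) := by
    intro t
    rw [hcomp, roots_pow, Multiset.count_nsmul]
    exact even_two_mul _
  -- any odd-multiplicity root gives a square decomposition of l - C a
  have gen : ∀ a ∈ S, ¬Even (m a) → ∃ p : Polynomial ℂ, l - C a = p ^ 2 := by
    intro a haS hma
    apply sq_of_even_counts _ (hlC a)
    intro t
    by_cases ht : l.eval t = a
    · have h1 := hcount t
      have h2 : ∀ b ∈ S, b ≠ a → (l - C b).roots.count t = 0 := by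
        intro b _ hba
        rw [Multiset.count_eq_zero]
        intro hmem
        have hR := (mem_roots (hlC b)).mp hmem
        simp only [IsRoot, eval_sub, eval_C, ht, sub_eq_zero] at hR
        exact hba hR.symm
      rw [Finset.sum_eq_single_of_mem a haS
        (fun b hb hba => by rw [h2 b hb hba, mul_zero])] at h1
      have he := hcompeven t
      rw [h1] at he
      rcases Nat.even_mul.mp he with h' | h'
      · exact absurd h' hma
      · exact h'
    · have hz : (l - C a).roots.count t = 0 := by
        rw [Multiset.count_eq_zero]
        intro hmem
        have hR := (mem_roots (hlC a)).mp hmem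
        simp only [IsRoot, eval_sub, eval_C, sub_eq_zero] at hR
        exact ht hR
      rw [hz]; exact Even.zero
  have key : ∀ a ∈ S, Even (m a) := by
    by_contra hodd
    push_neg at hodd
    obtain ⟨a, haS, hma⟩ := hodd
    have huniq : ∀ b ∈ S, b ≠ a → Even (m b) := by
      intro b hbS hba
      by_contra hmb
      obtain ⟨p, hp⟩ := gen a haS hma
      obtain ⟨q, hq⟩ := gen b hbS hmb
      exact at_most_one_sq l hl a b (Ne.symm hba) p q hp hq
    have hsum : ∑ b ∈ S, m b = f.natDegree := by
      have hcard : Multiset.card f.roots = f.natDegree :=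
        (splits_iff_card_roots).mp (IsAlgClosed.splits f)
      rw [← hcard, ← Multiset.toFinset_sum_count_eq]
    have hrest : Even (∑ b ∈ S.erase a, m b) :=
      Finset.even_sum _ fun b hb =>
        huniq b (Finset.mem_of_mem_erase hb) (Finset.ne_of_mem_erase hb)
    have hsplit : ∑ b ∈ S, m b = m a + ∑ b ∈ S.erase a, m b :=
      (Finset.add_sum_erase S m haS).symm
    rw [hsum] at hsplit
    rcases hev with ⟨k, hk⟩
    rcases hrest with ⟨j, hj⟩
    exact hma ⟨k - j, by omega⟩
  apply sq_of_even_counts f hf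
  intro a
  by_cases ha : a ∈ S
  · exact key a ha
  · rw [Multiset.count_eq_zero.mpr (fun hmem => ha (Multiset.mem_toFinset.mpr hmem))]
    exact Even.zero
end

section
/- With Hₙ as above, if m ∈ ℤ and Hₘ is a square in ℂ[X], then m ∈ {-2, 0, 1}. -/
open Polynomial


lemma sq_descent : ∀ (n : ℕ) (f : Polynomial ℚ), f.natDegree = n → f.Monic →
    IsSquare (f.map (algebraMap ℚ ℂ)) → IsSquare f := by
  intro n
  induction n using Nat.strong_induction_on with
  | _ n ih =>
    intro f hdeg hf hsq
    rcases Nat.eq_zero_or_pos n with h0 | hpos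
    · rw [h0] at hdeg
      rw [(Polynomial.Monic.natDegree_eq_zero hf).mp hdeg]
      exact ⟨1, by simp⟩
    · have hf0 : f ≠ 0 := hf.ne_zero
      have hfu : ¬ IsUnit f := fun hu => by
        rw [Polynomial.natDegree_eq_zero_of_isUnit hu] at hdeg; omega
      obtain ⟨p, hpirr, hpdvd⟩ := WfDvdMonoid.exists_irreducible_factor hfu hf0
      have hp0 : p ≠ 0 := hpirr.ne_zero
      set q : Polynomial ℚ := p * C (p.leadingCoeff)⁻¹ with hqdef
      have hq : q.Monic := monic_mul_leadingCoeff_inv hp0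
      have hassoc : Associated p q :=
        (associated_mul_unit_left p _ (Polynomial.isUnit_C.mpr (isUnit_iff_ne_zero.mpr
          (inv_ne_zero (Polynomial.leadingCoeff_ne_zero.mpr hp0))))).symm
      have hqirr : Irreducible q := hassoc.irreducible hpirr
      have hqdvd : q ∣ f := hassoc.symm.dvd.trans hpdvd
      -- over ℂ
      obtain ⟨h, hh⟩ := hsq
      have hrad : IsRadical (q.map (algebraMap ℚ ℂ)) :=
        ((hqirr.separable).map).squarefree.isRadical
      have hqh : q.map (algebraMap ℚ ℂ) ∣ h := by
        refine hrad 2 h ?_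
        rw [sq, ← hh]
        exact Polynomial.map_dvd _ hqdvd
      obtain ⟨w, hw⟩ := hqh
      have hq2dvd : q ^ 2 ∣ f := by
        rw [← Polynomial.map_dvd_map (algebraMap ℚ ℂ)
          (algebraMap ℚ ℂ).injective (hq.pow 2)]
        rw [Polynomial.map_pow, hh, hw]
        exact ⟨w * w, by ring⟩
      obtain ⟨g, hg⟩ := hq2dvd
      have hgmonic : g.Monic := (hq.pow 2).of_mul_monic_left (hg ▸ hf)
      have hqdegpos : 0 < q.natDegree := hqirr.natDegree_pos
      have hdeg' : f.natDegree = 2 * q.natDegree + g.natDegree := by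
        rw [hg, Polynomial.natDegree_mul (pow_ne_zero 2 hq.ne_zero) hgmonic.ne_zero,
          Polynomial.natDegree_pow]
      have hglt : g.natDegree < n := by omega
      have hgsq : IsSquare (g.map (algebraMap ℚ ℂ)) := by
        have hqC0 : (q.map (algebraMap ℚ ℂ)) ^ 2 ≠ 0 := by
          apply pow_ne_zero
          simpa using (Polynomial.map_ne_zero_iff (algebraMap ℚ ℂ).injective).mpr hq.ne_zero
        refine ⟨w, mul_left_cancel₀ hqC0 ?_⟩
        have := hg ▸ hh
        rw [Polynomial.map_mul, Polynomial.map_pow] at this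
        rw [hw] at this
        exact this.trans (by ring)
      obtain ⟨u, hu⟩ := ih g.natDegree hglt g rfl hgmonic hgsq
      exact ⟨q * u, by rw [hg, hu]; ring⟩


lemma no_two_mul_sq (f : Polynomial ℤ)
    (hodd : f.map (Int.castRingHom (ZMod 2)) ≠ 0) (u : Polynomial ℚ)
    (hu : f.map (Int.castRingHom ℚ) = C 2 * u ^ 2) : False := by
  obtain ⟨b, hb⟩ := IsLocalization.integerNormalization_map_to_map
    (nonZeroDivisors ℤ) u
  set w : Polynomial ℤ := IsLocalization.integerNormalization (nonZeroDivisors ℤ) u with hwdef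
  have hb0 : (b : ℤ) ≠ 0 := nonZeroDivisors.coe_ne_zero b
  have key : C ((b : ℤ) ^ 2) * f = C 2 * w ^ 2 := by
    apply Polynomial.map_injective (Int.castRingHom ℚ) Int.cast_injective
    have : w.map (Int.castRingHom ℚ) = C ((b : ℤ) : ℚ) * u := by
      rw [show (Int.castRingHom ℚ) = algebraMap ℤ ℚ from rfl, hb]
      ext n
      rw [Polynomial.coeff_smul, Polynomial.coeff_C_mul, zsmul_eq_mul]
    rw [Polynomial.map_mul, Polynomial.map_mul, Polynomial.map_pow, this, hu]
    simp only [Polynomial.map_C, eq_intCast, Polynomial.map_intCast, Polynomial.map_pow,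
      Polynomial.map_ofNat, Int.cast_pow, Int.cast_ofNat]
    push_cast [Polynomial.C_eq_intCast]
    rw [show (C (2:ℚ)) = (2 : ℚ[X]) from by exact_mod_cast Polynomial.C_eq_natCast 2]
    ring
  have hcont := congrArg Polynomial.content key
  rw [Polynomial.content_C_mul, Polynomial.content_C_mul, sq w, Polynomial.content_mul,
    ← sq] at hcont
  rw [Int.normalize_of_nonneg (sq_nonneg _), Int.normalize_of_nonneg (by norm_num)] at hcont
  -- hcont : (b:ℤ)^2 * f.content = 2 * w.content ^ 2
  have hcf_odd : ¬ (2 : ℤ) ∣ f.content := by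
    intro h2
    apply hodd
    ext n
    have : (2 : ℤ) ∣ f.coeff n := h2.trans (Polynomial.content_dvd_coeff n)
    simp only [Polynomial.coeff_map, Polynomial.coeff_zero, eq_intCast]
    rwa [ZMod.intCast_zmod_eq_zero_iff_dvd]
  have hcf0 : f.content ≠ 0 := fun h => hodd (by
    rw [Polynomial.content_eq_zero_iff] at h; simp [h])
  have hw0 : w.content ≠ 0 := by
    intro h
    rw [h] at hcont
    exact hcf0 (by
      have := mul_eq_zero.mp (by rw [hcont]; ring_nf : (b:ℤ)^2 * f.content = 0)
      rcases this with h' | h'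
      · exact absurd h' (pow_ne_zero 2 hb0)
      · exact h')
  -- pass to ℕ
  have hnat : (b : ℤ).natAbs ^ 2 * f.content.natAbs = 2 * w.content.natAbs ^ 2 := by
    have := congrArg Int.natAbs hcont
    simpa [Int.natAbs_mul, Int.natAbs_pow] using this
  have hB : (b : ℤ).natAbs ≠ 0 := Int.natAbs_ne_zero.mpr hb0
  have hC : f.content.natAbs ≠ 0 := Int.natAbs_ne_zero.mpr hcf0
  have hW : w.content.natAbs ≠ 0 := Int.natAbs_ne_zero.mpr hw0
  have hCodd : ¬ 2 ∣ f.content.natAbs := by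
    intro h
    exact hcf_odd (Int.dvd_natAbs.mp (by exact_mod_cast Int.natCast_dvd_natCast.mpr h))
  have h1 := congrArg (Nat.factorization · 2) hnat
  simp only [Nat.factorization_mul (pow_ne_zero 2 hB) hC,
    Nat.factorization_mul (two_ne_zero) (pow_ne_zero 2 hW),
    Nat.factorization_pow, Nat.Prime.factorization_self Nat.prime_two,
    Finsupp.add_apply, Finsupp.smul_apply, smul_eq_mul,
    Nat.factorization_eq_zero_of_not_dvd hCodd] at h1
  omega


lemma fwd_struct (H : ℤ → Polynomial ℤ)
    (hH0 : H 0 = 1) (hH1 : H 1 = 2)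
    (hH : ∀ n : ℤ, H (n + 2) = Polynomial.X * H (n + 1) + H n) :
    ∀ k : ℕ, ((H ((k : ℤ) + 2)).degree = ((k : ℕ) + 1 : ℕ)
      ∧ (H ((k : ℤ) + 2)).leadingCoeff = 2
      ∧ ((H ((k : ℤ) + 2)).map (Int.castRingHom (ZMod 2))).Monic
      ∧ ((H ((k : ℤ) + 2)).map (Int.castRingHom (ZMod 2))).degree = (k : ℕ)) := by
  have hH2 : H 2 = X * 2 + 1 := by
    have := hH 0; norm_num at this; rw [hH0, hH1] at this; exact this
  have hH3 : H 3 = X * (X * 2 + 1) + 2 := by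
    have := hH 1; norm_num at this; rw [hH1, hH2] at this; exact this
  have h20 : (2 : (ZMod 2)[X]) = 0 := by
    rw [← map_ofNat (C : ZMod 2 →+* _) 2]; simp [show (2 : ZMod 2) = 0 from rfl]
  have hmap2 : (X * 2 + 1 : Polynomial ℤ).map (Int.castRingHom (ZMod 2)) = 1 := by
    simp [h20]
  have hmap3 : (X * (X * 2 + 1) + 2 : Polynomial ℤ).map (Int.castRingHom (ZMod 2)) = X := by
    simp only [Polynomial.map_add, Polynomial.map_mul, Polynomial.map_X] at hmap2 ⊢
    rw [hmap2]
    simp [h20]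
  suffices h : ∀ k : ℕ, (((H ((k : ℤ) + 2)).degree = ((k : ℕ) + 1 : ℕ)
      ∧ (H ((k : ℤ) + 2)).leadingCoeff = 2
      ∧ ((H ((k : ℤ) + 2)).map (Int.castRingHom (ZMod 2))).Monic
      ∧ ((H ((k : ℤ) + 2)).map (Int.castRingHom (ZMod 2))).degree = (k : ℕ))
      ∧ ((H (((k+1) : ℤ) + 2)).degree = (((k:ℕ)+1) + 1 : ℕ)
      ∧ (H (((k+1) : ℤ) + 2)).leadingCoeff = 2
      ∧ ((H (((k+1) : ℤ) + 2)).map (Int.castRingHom (ZMod 2))).Monic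
      ∧ ((H (((k+1) : ℤ) + 2)).map (Int.castRingHom (ZMod 2))).degree = ((k:ℕ)+1 : ℕ))) by
    intro k
    exact (h k).1
  intro k
  induction k with
  | zero =>
    norm_num
    rw [hH2, hH3, hmap2, hmap3]
    refine ⟨⟨by compute_degree!, ?_, monic_one, degree_one⟩,
            by compute_degree!, ?_, monic_X, degree_X⟩
    · rw [Polynomial.leadingCoeff,
        show (X * 2 + 1 : Polynomial ℤ).natDegree = 1 by compute_degree!]
      compute_degree
    · rw [Polynomial.leadingCoeff,
        show (X * (X * 2 + 1) + 2 : Polynomial ℤ).natDegree = 2 by compute_degree!]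
      compute_degree!
  | succ n ih =>
    obtain ⟨⟨d1, l1, m1, b1⟩, ⟨d2, l2, m2, b2⟩⟩ := ih
    refine ⟨⟨d2, l2, m2, b2⟩, ?_⟩
    have e2 : (((n:ℕ)+1+1 : ℕ) : ℤ) + 2 = ((n:ℕ)+1 : ℤ) + 2 + 1 := by push_cast; ring
    have hrec : H ((((n:ℕ)+1+1 : ℕ) : ℤ) + 2)
        = X * H ((((n:ℕ)+1 : ℕ)) + 2) + H ((n : ℤ) + 2) := by
      have := hH ((n : ℤ) + 2)
      rw [show (n:ℤ) + 2 + 2 = (((n:ℕ)+1+1 : ℕ) : ℤ) + 2 by push_cast; ring,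
        show (n:ℤ) + 2 + 1 = (((n:ℕ)+1 : ℕ) : ℤ) + 2 by push_cast; ring] at this
      exact this
    have hcast : ((((n:ℕ)+1 : ℕ)) + 2 : ℤ) = (((n:ℕ)+1 : ℤ)) + 2 := by push_cast; ring
    have egoal : ((((n:ℕ)+1 : ℕ)) : ℤ) + 1 + 2 = ((((n:ℕ)+1+1 : ℕ)) : ℤ) + 2 := by
      push_cast; ring
    rw [egoal, hrec, hcast]
    have dX : (X * H (((n:ℕ)+1 : ℤ) + 2)).degree = ((n + 3 : ℕ) : WithBot ℕ) := by
      rw [degree_mul, degree_X, d2]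
      rw [show ((n:ℕ)+1+1 : ℕ) = (n+2 : ℕ) from rfl, show (n+3 : ℕ) = 1 + (n+2 : ℕ) by omega,
        Nat.cast_add]
      rfl
    have dlt : (H ((n : ℤ) + 2)).degree < (X * H (((n:ℕ)+1 : ℤ) + 2)).degree := by
      rw [dX, d1, Nat.cast_withBot, Nat.cast_withBot]
      exact WithBot.coe_lt_coe.mpr (by omega)
    constructor
    · rw [degree_add_eq_left_of_degree_lt dlt, dX]
    constructor
    · rw [leadingCoeff_add_of_degree_lt' dlt, leadingCoeff_mul, leadingCoeff_X, one_mul, l2]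
    -- ZMod 2 part
    have hmaprec : (X * H (((n:ℕ)+1 : ℤ) + 2) + H ((n : ℤ) + 2)).map (Int.castRingHom (ZMod 2))
        = X * ((H (((n:ℕ)+1 : ℤ) + 2)).map (Int.castRingHom (ZMod 2)))
          + ((H ((n : ℤ) + 2)).map (Int.castRingHom (ZMod 2))) := by
      simp [Polynomial.map_add, Polynomial.map_mul]
    rw [hmaprec]
    have dXb : (X * ((H (((n:ℕ)+1 : ℤ) + 2)).map (Int.castRingHom (ZMod 2)))).degree
        = ((n + 2 : ℕ) : WithBot ℕ) := by
      rw [degree_mul, degree_X, b2]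
      rw [show (n+2 : ℕ) = 1 + (n+1 : ℕ) by omega, Nat.cast_add]
      rfl
    have dltb : ((H ((n : ℤ) + 2)).map (Int.castRingHom (ZMod 2))).degree
        < (X * ((H (((n:ℕ)+1 : ℤ) + 2)).map (Int.castRingHom (ZMod 2)))).degree := by
      rw [dXb, b1, Nat.cast_withBot, Nat.cast_withBot]
      exact WithBot.coe_lt_coe.mpr (by omega)
    constructor
    · exact (monic_X.mul m2).add_of_left dltb
    · rw [degree_add_eq_left_of_degree_lt dltb, dXb]


lemma bwd_struct (H : ℤ → Polynomial ℤ)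
    (hH0 : H 0 = 1) (hH1 : H 1 = 2)
    (hH : ∀ n : ℤ, H (n + 2) = Polynomial.X * H (n + 1) + H n) :
    ∀ k : ℕ, (H (-((k:ℤ)+1))).degree = ((k:ℕ)+1 : ℕ)
      ∧ (H (-((k:ℤ)+1))).leadingCoeff = (-1)^(k+1) := by
  have hm1 : H (-1) = -X + 2 := by
    have := hH (-1); norm_num at this; rw [hH0, hH1] at this
    have := eq_sub_of_add_eq' this.symm
    rw [this]; ring
  have hm2 : H (-2) = X^2 - X*2 + 1 := by
    have := hH (-2); norm_num at this; rw [hH0, hm1] at this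
    have := eq_sub_of_add_eq' this.symm
    rw [this]; ring
  suffices h : ∀ k : ℕ, ((H (-((k:ℤ)+1))).degree = ((k:ℕ)+1 : ℕ)
      ∧ (H (-((k:ℤ)+1))).leadingCoeff = (-1)^(k+1))
      ∧ ((H (-(((k:ℤ)+1)+1))).degree = (((k:ℕ)+1)+1 : ℕ)
      ∧ (H (-(((k:ℤ)+1)+1))).leadingCoeff = (-1)^((k+1)+1)) from fun k => (h k).1
  intro k
  induction k with
  | zero =>
    norm_num
    rw [hm1, hm2]
    refine ⟨⟨by compute_degree!, ?_⟩, by compute_degree!, ?_⟩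
    · rw [Polynomial.leadingCoeff,
        show (-X + 2 : Polynomial ℤ).natDegree = 1 by compute_degree!]
      compute_degree!
    · rw [Polynomial.leadingCoeff,
        show (X^2 - X*2 + 1 : Polynomial ℤ).natDegree = 2 by compute_degree!]
      compute_degree!
  | succ n ih =>
    obtain ⟨⟨d1, l1⟩, d2, l2⟩ := ih
    refine ⟨⟨d2, l2⟩, ?_⟩
    have hrec : H (-(((n:ℤ)+1)+1+1)) = H (-((n:ℤ)+1)) + -(X * H (-(((n:ℤ)+1)+1))) := by
      have := hH (-((n:ℤ)+3))
      rw [show -((n:ℤ)+3) + 2 = -((n:ℤ)+1) by ring,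
        show -((n:ℤ)+3) + 1 = -(((n:ℤ)+1)+1) by ring,
        show -((n:ℤ)+3) = -(((n:ℤ)+1)+1+1) by ring] at this
      have := eq_sub_of_add_eq' this.symm
      rw [this]; ring
    have dX : (-(X * H (-(((n:ℤ)+1)+1)))).degree = ((n + 3 : ℕ) : WithBot ℕ) := by
      rw [degree_neg, degree_mul, degree_X, d2]
      rw [show (n+3 : ℕ) = 1 + (n+1+1 : ℕ) by omega, Nat.cast_add]
      rfl
    have dlt : (H (-((n:ℤ)+1))).degree < (-(X * H (-(((n:ℤ)+1)+1)))).degree := by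
      rw [dX, d1, Nat.cast_withBot, Nat.cast_withBot]
      exact WithBot.coe_lt_coe.mpr (by omega)
    have egoal2 : -(((((n:ℕ)+1 : ℕ)):ℤ)+1+1) = -(((n:ℤ)+1)+1+1) := by push_cast; ring
    rw [egoal2, hrec]
    constructor
    · rw [degree_add_eq_right_of_degree_lt dlt, dX]
    · rw [leadingCoeff_add_of_degree_lt dlt, leadingCoeff_neg, leadingCoeff_mul,
        leadingCoeff_X, one_mul, l2]
      ring


lemma eval_neg (H : ℤ → Polynomial ℤ)
    (hH0 : H 0 = 1) (hH1 : H 1 = 2)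
    (hH : ∀ n : ℤ, H (n + 2) = Polynomial.X * H (n + 1) + H n) :
    ∀ j : ℕ, (H (-(2*(j:ℤ)+4))).eval 1 < 0 ∧ 0 < (H (-(2*(j:ℤ)+5))).eval 1 := by
  have hm1 : H (-1) = -X + 2 := by
    have := hH (-1); norm_num at this; rw [hH0, hH1] at this
    have := eq_sub_of_add_eq' this.symm
    rw [this]; ring
  have trec : ∀ k : ℤ, (H (-(k+2))).eval 1 = (H (-k)).eval 1 - (H (-(k+1))).eval 1 := by
    intro k
    have := hH (-(k+2))
    rw [show -(k+2) + 2 = -k by ring, show -(k+2) + 1 = -(k+1) by ring] at this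
    have h2 := congrArg (Polynomial.eval 1) this
    simp only [Polynomial.eval_add, Polynomial.eval_mul, Polynomial.eval_X, one_mul] at h2
    linarith
  have e0 : (H 0).eval 1 = 1 := by rw [hH0]; simp
  have e1 : (H (-1)).eval 1 = 1 := by rw [hm1]; simp
  have e2 : (H (-2)).eval 1 = 0 := by
    have h := trec 0; norm_num [e0, e1] at h; exact h
  have e3 : (H (-3)).eval 1 = 1 := by
    have h := trec 1; norm_num [e1, e2] at h; exact h
  have e4 : (H (-4)).eval 1 = -1 := by
    have h := trec 2; norm_num [e2, e3] at h; exact h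
  have e5 : (H (-5)).eval 1 = 2 := by
    have h := trec 3; norm_num [e3, e4] at h; exact h
  intro j
  induction j with
  | zero => norm_num [e4, e5]
  | succ n ih =>
    obtain ⟨i4, i5⟩ := ih
    have s1 := trec (2*(n:ℤ)+4)
    have s2 := trec (2*(n:ℤ)+5)
    rw [show (2*(n:ℤ)+5+1) = (2*(n:ℤ)+4+2) by ring] at s2
    constructor
    · rw [show (2*((n+1:ℕ):ℤ)+4) = (2*(n:ℤ)+4)+2 by push_cast; ring]
      rw [show (2*(n:ℤ)+4+1) = (2*(n:ℤ)+5) by ring] at s1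
      linarith
    · rw [show (2*((n+1:ℕ):ℤ)+5) = (2*(n:ℤ)+5)+2 by push_cast; ring]
      rw [show (2*(n:ℤ)+4+1) = (2*(n:ℤ)+5) by ring] at s1
      linarith

/-- With H₀ = 1, H₁ = 2, H_{n+2} = X·H_{n+1} + Hₙ (n ∈ ℤ), if Hₘ is a square
in ℂ[X] then m ∈ {-2, 0, 1}. -/
theorem stmt_16 (H : ℤ → Polynomial ℤ)
    (hH0 : H 0 = 1) (hH1 : H 1 = 2)
    (hH : ∀ n : ℤ, H (n + 2) = Polynomial.X * H (n + 1) + H n)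
    (m : ℤ) (hm : ∃ h : Polynomial ℂ, (H m).map (Int.castRingHom ℂ) = h ^ 2) :
    m = -2 ∨ m = 0 ∨ m = 1 := by
  obtain ⟨h, hmap⟩ := hm
  by_contra hcon
  push_neg at hcon
  obtain ⟨hne2, hne0, hne1⟩ := hcon
  exfalso
  have hQC : ((H m).map (Int.castRingHom ℚ)).map (algebraMap ℚ ℂ)
      = (H m).map (Int.castRingHom ℂ) := by
    rw [Polynomial.map_map,
      RingHom.ext_int ((algebraMap ℚ ℂ).comp (Int.castRingHom ℚ)) (Int.castRingHom ℂ)]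
  rcases le_or_gt 2 m with hge | hlt
  · -- m ≥ 2 : content argument
    have hk' : ((m-2).toNat : ℤ) = m - 2 := Int.toNat_of_nonneg (by omega)
    have hkm : (((m-2).toNat : ℕ) : ℤ) + 2 = m := by omega
    obtain ⟨hdeg, hlc, hmon2, hdeg2⟩ := fwd_struct H hH0 hH1 hH (m-2).toNat
    rw [hkm] at hlc hmon2
    set fQ := (H m).map (Int.castRingHom ℚ) with hfQdef
    have hlcQ : fQ.leadingCoeff = 2 := by
      rw [hfQdef, Polynomial.leadingCoeff_map_of_injective Int.cast_injective, hlc]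
      norm_num
    have hmonic : (C (2⁻¹ : ℚ) * fQ).Monic := by
      unfold Polynomial.Monic
      rw [leadingCoeff_mul, leadingCoeff_C, hlcQ]
      norm_num
    have hc : (((Real.sqrt 2 : ℝ) : ℂ))⁻¹ ^ 2 = (((2⁻¹ : ℚ) : ℂ)) := by
      rw [inv_pow, ← Complex.ofReal_pow, Real.sq_sqrt (by norm_num : (0:ℝ) ≤ 2)]
      norm_num
    have hsqC : IsSquare ((C (2⁻¹ : ℚ) * fQ).map (algebraMap ℚ ℂ)) := by
      rw [Polynomial.map_mul, map_C, hfQdef, hQC, hmap]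
      refine ⟨C (((Real.sqrt 2 : ℝ) : ℂ))⁻¹ * h, ?_⟩
      rw [mul_mul_mul_comm, ← C_mul, ← sq, ← sq, hc]
      norm_num
    obtain ⟨u, hu⟩ := sq_descent (C (2⁻¹ : ℚ) * fQ).natDegree (C (2⁻¹ : ℚ) * fQ)
      rfl hmonic hsqC
    have hfQ : fQ = C (2:ℚ) * u ^ 2 := by
      calc fQ = C (2:ℚ) * (C (2⁻¹:ℚ) * fQ) := by
              rw [← mul_assoc, ← C_mul]; norm_num
        _ = C (2:ℚ) * u ^ 2 := by rw [hu, sq]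
    exact no_two_mul_sq (H m) hmon2.ne_zero u hfQ
  · -- m ≤ -1
    have hmneg : m ≤ -1 := by omega
    have hk' : ((-m-1).toNat : ℤ) = -m - 1 := Int.toNat_of_nonneg (by omega)
    set k : ℕ := (-m-1).toNat with hkdef
    have hkm : -((k:ℤ)+1) = m := by omega
    obtain ⟨hdeg, hlc⟩ := bwd_struct H hH0 hH1 hH k
    rw [hkm] at hdeg hlc
    rcases Nat.even_or_odd (k+1) with heven | hodd
    · -- even degree, monic case
      have hlc1 : (H m).leadingCoeff = 1 := by
        rw [hlc, Even.neg_pow heven, one_pow]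
      have hmonicQ : ((H m).map (Int.castRingHom ℚ)).Monic := by
        unfold Polynomial.Monic
        rw [Polynomial.leadingCoeff_map_of_injective Int.cast_injective, hlc1]
        norm_num
      have hsqC : IsSquare (((H m).map (Int.castRingHom ℚ)).map (algebraMap ℚ ℂ)) := by
        rw [hQC, hmap]
        exact ⟨h, sq h⟩
      obtain ⟨u, hu⟩ := sq_descent _ _ rfl hmonicQ hsqC
      have heval : (((H m).eval 1 : ℤ) : ℚ) = (u.eval 1)^2 := by
        have h2 := congrArg (Polynomial.eval (1:ℚ)) hu
        rw [Polynomial.eval_one_map, Polynomial.eval_mul] at h2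
        rw [← sq] at h2
        exact h2
      obtain ⟨j, hj⟩ : ∃ j : ℕ, k+1 = 2*j+4 := by
        obtain ⟨t, ht⟩ := heven
        have hkne1 : k + 1 ≠ 2 := fun hc => hne2 (by omega)
        have : k + 1 ≠ 0 := by omega
        exact ⟨t-2, by omega⟩
      have hneg := (eval_neg H hH0 hH1 hH j).1
      rw [show -(2*(j:ℤ)+4) = m by omega] at hneg
      have hnegQ : (((H m).eval 1 : ℤ) : ℚ) < 0 := by exact_mod_cast hneg
      nlinarith [sq_nonneg (u.eval 1), heval]
    · -- odd degree: impossible for a square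
      have hnd : (H m).natDegree = k+1 := natDegree_eq_of_degree_eq_some hdeg
      have hndC : ((H m).map (Int.castRingHom ℂ)).natDegree = k+1 := by
        rw [Polynomial.natDegree_map_eq_of_injective Int.cast_injective, hnd]
      rw [hmap, Polynomial.natDegree_pow] at hndC
      obtain ⟨t, ht⟩ := hodd
      omega
end
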